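/- Let Q be a finite quiver without oriented cycles. Then the path algebra ℂQ has the lifting property for algebra morphisms modulo nilpotent ideals: for every ℂ-algebra B with nilpotent two-sided ideal I and every ℂ-algebra homomorphism f : ℂQ → B/I, there exists a ℂ-algebra homomorphism g : ℂQ → B with π ∘ g = f, where π : B → B/I is the quotient map. -/

import Mathlib

open Quiver

section PathAlgebra

/- We axiomatize the path algebra ℂQ of a quiver: an associative ℂ-algebra `A` with a
ℂ-basis indexed by the oriented paths of `Q`, in which the product of two basis elements
is the concatenated path when the paths are composable and `0` otherwise.  (Multiplication
is written so that for `p : Path a b` and `q : Path b c` the product of the basis element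
of `q` with that of `p` is the basis element of `p.comp q`, i.e. paths act by left
concatenation.)  These hypotheses determine `A` up to isomorphism, so any theorem stated
with them is a theorem about the path algebra. -/
variable {V : Type} [Quiver.{1} V]
variable (A : Type) [Ring A] [Algebra ℂ A]
variable (b : Module.Basis (Σ a c : V, Quiver.Path a c) ℂ A)

def IsPathAlgebraBasis : Prop :=
  (∀ (x y z : V) (p : Quiver.Path x y) (q : Quiver.Path y z),
      b ⟨y, z, q⟩ * b ⟨x, y, p⟩ = b ⟨x, z, p.comp q⟩) ∧
  (∀ (x y x' z : V) (p : Quiver.Path x y) (q : Quiver.Path x' z),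
      x' ≠ y → b ⟨x', z, q⟩ * b ⟨x, y, p⟩ = 0)

/-- The idempotent of the vertex `i` : the length-zero path at `i`. -/
noncomputable def vertexIdem (i : V) : A := b ⟨i, i, Quiver.Path.nil⟩

/-- The indecomposable projective left ideal `P i = (ℂQ)·e_i`. -/
noncomputable def vertexProj (i : V) : Submodule A A := Submodule.span A {vertexIdem A b i}

end PathAlgebra

section LiftAux

variable {V : Type} [Quiver.{1} V] {B : Type} [Ring B]

/-- Lift of a path: the product of the lifts of the arrows of the path (with the lifted
idempotent at the starting vertex for the empty path). -/
def pathLift (ε : V → B) (L : ∀ ⦃i j : V⦄, (i ⟶ j) → B) :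
    ∀ {x y : V}, Quiver.Path x y → B
  | x, _, Quiver.Path.nil => ε x
  | _, _, Quiver.Path.cons p α => L α * pathLift ε L p

@[simp] lemma pathLift_nil (ε : V → B) (L : ∀ ⦃i j : V⦄, (i ⟶ j) → B) (x : V) :
    pathLift ε L (Quiver.Path.nil : Quiver.Path x x) = ε x := by rw [pathLift]

@[simp] lemma pathLift_cons (ε : V → B) (L : ∀ ⦃i j : V⦄, (i ⟶ j) → B)
    {x y z : V} (p : Quiver.Path x y) (α : y ⟶ z) :
    pathLift ε L (p.cons α) = L α * pathLift ε L p := by rw [pathLift]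

variable {ε : V → B} {L : ∀ ⦃i j : V⦄, (i ⟶ j) → B}

lemma pathLift_left (hidem : ∀ i, IsIdempotentElem (ε i))
    (hLl : ∀ {i j : V} (α : i ⟶ j), ε j * L α = L α)
    {x y : V} (p : Quiver.Path x y) :
    ε y * pathLift ε L p = pathLift ε L p := by
  cases p with
  | nil => rw [pathLift_nil]; exact hidem x
  | cons p α => rw [pathLift_cons, ← mul_assoc, hLl]

lemma pathLift_right (hidem : ∀ i, IsIdempotentElem (ε i))
    (hLr : ∀ {i j : V} (α : i ⟶ j), L α * ε i = L α)
    {x y : V} (p : Quiver.Path x y) :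
    pathLift ε L p * ε x = pathLift ε L p := by
  induction p with
  | nil => rw [pathLift_nil]; exact hidem x
  | cons p α ih => rw [pathLift_cons, mul_assoc, ih]

lemma pathLift_left_ne (hidem : ∀ i, IsIdempotentElem (ε i))
    (horth : ∀ i j : V, i ≠ j → ε i * ε j = 0)
    (hLl : ∀ {i j : V} (α : i ⟶ j), ε j * L α = L α)
    {x y : V} (i : V) (h : i ≠ y) (p : Quiver.Path x y) :
    ε i * pathLift ε L p = 0 := by
  rw [← pathLift_left hidem hLl p, ← mul_assoc, horth i y h, zero_mul]

lemma pathLift_comp (hidem : ∀ i, IsIdempotentElem (ε i))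
    (hLl : ∀ {i j : V} (α : i ⟶ j), ε j * L α = L α)
    {x y z : V} (p : Quiver.Path x y) (q : Quiver.Path y z) :
    pathLift ε L q * pathLift ε L p = pathLift ε L (p.comp q) := by
  induction q with
  | nil => rw [Quiver.Path.comp_nil, pathLift_nil]; exact pathLift_left hidem hLl p
  | cons q α ih =>
    rw [Quiver.Path.comp_cons, pathLift_cons, pathLift_cons, mul_assoc, ih]

lemma pathLift_mul_ne (hidem : ∀ i, IsIdempotentElem (ε i))
    (horth : ∀ i j : V, i ≠ j → ε i * ε j = 0)
    (hLl : ∀ {i j : V} (α : i ⟶ j), ε j * L α = L α)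
    (hLr : ∀ {i j : V} (α : i ⟶ j), L α * ε i = L α)
    {x y x' z : V} (h : x' ≠ y) (q : Quiver.Path x' z) (p : Quiver.Path x y) :
    pathLift ε L q * pathLift ε L p = 0 := by
  rw [← pathLift_right hidem hLr q, mul_assoc,
    pathLift_left_ne hidem horth hLl x' h p, mul_zero]

end LiftAux

/-- the path algebra ℂQ of a finite quiver without oriented cycles is
quasi-free (formally smooth): any ℂ-algebra morphism from ℂQ to a quotient of a
ℂ-algebra B by a nilpotent two-sided ideal (presented as a surjection π : B → C whose
kernel is nilpotent) lifts to B. -/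
theorem path_algebra_formally_smooth {V : Type} [Quiver.{1} V] [Fintype V]
    [∀ i j : V, Fintype (i ⟶ j)]
    (hacyclic : ∀ (v : V) (p : Quiver.Path v v), p.length = 0)
    (A : Type) [Ring A] [Algebra ℂ A] (b : Module.Basis (Σ a c : V, Quiver.Path a c) ℂ A)
    (hb : IsPathAlgebraBasis A b) :
    ∀ (B C : Type) [Ring B] [Algebra ℂ B] [Ring C] [Algebra ℂ C] (π : B →ₐ[ℂ] C),
      Function.Surjective π →
      (∃ mExp : ℕ, ∀ x : Fin mExp → B, (∀ i, π (x i) = 0) → (List.ofFn x).prod = 0) →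
      ∀ f : A →ₐ[ℂ] C, ∃ g : A →ₐ[ℂ] B, π.comp g = f := by
  classical
  intro B C _ _ _ _ π hsurj hnil f
  obtain ⟨hb1, hb2⟩ := hb
  -- the kernel of π is nil
  have hker : ∀ x ∈ RingHom.ker (π : B →+* C), IsNilpotent x := by
    obtain ⟨m, hm⟩ := hnil
    intro x hx
    refine ⟨m, ?_⟩
    have := hm (fun _ => x) (fun _ => hx)
    simpa [List.ofFn_const, List.prod_replicate] using this
  -- vertex idempotents in A
  set e : V → A := fun i => b ⟨i, i, Quiver.Path.nil⟩ with he_def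
  have he : ∀ i, e i = b ⟨i, i, Quiver.Path.nil⟩ := fun _ => rfl
  have he_idem : ∀ i, e i * e i = e i := fun i => by
    rw [he, hb1 i i i Quiver.Path.nil Quiver.Path.nil, Quiver.Path.comp_nil]
  have he_orth : ∀ i j : V, i ≠ j → e i * e j = 0 := fun i j hij =>
    hb2 j j i i Quiver.Path.nil Quiver.Path.nil hij
  have he_mul_basis : ∀ (x y : V) (p : Quiver.Path x y), e y * b ⟨x, y, p⟩ = b ⟨x, y, p⟩ :=
    fun x y p => by rw [he, hb1 x y y p Quiver.Path.nil, Quiver.Path.comp_nil]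
  have hbasis_mul_e : ∀ (x y : V) (p : Quiver.Path x y), b ⟨x, y, p⟩ * e x = b ⟨x, y, p⟩ :=
    fun x y p => by rw [he, hb1 x x y Quiver.Path.nil p, Quiver.Path.nil_comp]
  -- the sum of the vertex idempotents is 1
  have hone : ∑ i, e i = 1 := by
    have hmul : ∀ a : A, (∑ i, e i) * a = a := by
      have : LinearMap.mulLeft ℂ (∑ i, e i) = LinearMap.id := by
        refine b.ext fun s => ?_
        obtain ⟨x, y, p⟩ := s
        simp only [LinearMap.mulLeft_apply, LinearMap.id_apply, Finset.sum_mul]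
        rw [Finset.sum_eq_single y]
        · exact he_mul_basis x y p
        · intro i _ hiy
          exact hb2 x y i i p Quiver.Path.nil hiy
        · intro h; exact absurd (Finset.mem_univ y) h
      intro a
      simpa using LinearMap.congr_fun this a
    have := hmul 1
    simpa using this
  -- the images of the vertex idempotents form a complete orthogonal system in C
  have hE : CompleteOrthogonalIdempotents (fun i => f (e i)) := by
    refine ⟨⟨fun i => ?_, fun i j hij => ?_⟩, ?_⟩
    · show f (e i) * f (e i) = f (e i)
      rw [← map_mul, he_idem]
    · show f (e i) * f (e j) = 0
      rw [← map_mul, he_orth i j hij, map_zero]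
    · rw [← map_sum, hone, map_one]
  -- lift them to B
  obtain ⟨ε, hε, hεπ⟩ := CompleteOrthogonalIdempotents.lift_of_isNilpotent_ker
    (π : B →+* C) hker hE (fun i => hsurj (f (e i)))
  have hπε : ∀ i, π (ε i) = f (e i) := fun i => congr_fun hεπ i
  have hεidem : ∀ i, IsIdempotentElem (ε i) := hε.idem
  have hεorth : ∀ i j : V, i ≠ j → ε i * ε j = 0 := fun i j hij => hε.ortho hij
  -- lift the arrows
  have harrow : ∀ (i j : V) (α : i ⟶ j), ∃ y : B, ε j * y = y ∧ y * ε i = y ∧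
      π y = f (b ⟨i, j, α.toPath⟩) := by
    intro i j α
    obtain ⟨y, hy⟩ := hsurj (f (b ⟨i, j, α.toPath⟩))
    refine ⟨ε j * y * ε i, ?_, ?_, ?_⟩
    · rw [← mul_assoc, ← mul_assoc, (hεidem j).eq]
    · rw [mul_assoc, (hεidem i).eq]
    · have key : e j * b ⟨i, j, α.toPath⟩ * e i = b ⟨i, j, α.toPath⟩ := by
        rw [mul_assoc, hbasis_mul_e, he_mul_basis]
      rw [map_mul, map_mul, hπε, hπε, hy, ← map_mul, ← map_mul, key]
  choose L hLl0 hLr0 hL2 using fun i j (α : i ⟶ j) => harrow i j α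
  set L' : ∀ ⦃i j : V⦄, (i ⟶ j) → B := fun i j α => L i j α with hL'def
  have hLl : ∀ {i j : V} (α : i ⟶ j), ε j * L' α = L' α := fun α => hLl0 _ _ α
  have hLr : ∀ {i j : V} (α : i ⟶ j), L' α * ε i = L' α := fun α => hLr0 _ _ α
  -- the lift of basis elements
  have hπP : ∀ (x y : V) (p : Quiver.Path x y),
      π (pathLift ε L' p) = f (b ⟨x, y, p⟩) := by
    intro x y p
    induction p with
    | nil => rw [pathLift_nil]; exact hπε x
    | cons p α ih =>
      rw [pathLift_cons, map_mul, ih, hL2, ← map_mul, hb1 _ _ _ p α.toPath]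
      rfl
  -- the candidate linear map
  set g₀ : A →ₗ[ℂ] B := b.constr ℂ (fun s => pathLift ε L' s.2.2) with hg₀def
  have hg₀b : ∀ (x y : V) (p : Quiver.Path x y),
      g₀ (b ⟨x, y, p⟩) = pathLift ε L' p := fun x y p => b.constr_basis ℂ _ _
  have hg₀one : g₀ 1 = 1 := by
    rw [← hone, map_sum, ← hε.complete]
    refine Finset.sum_congr rfl fun i _ => ?_
    rw [he, hg₀b, pathLift_nil]
  have hg₀mul : ∀ a a' : A, g₀ (a * a') = g₀ a * g₀ a' := by
    rw [LinearMap.map_mul_iff]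
    refine b.ext fun s => b.ext fun t => ?_
    obtain ⟨x₁, y₁, p₁⟩ := s
    obtain ⟨x₂, y₂, p₂⟩ := t
    simp only [LinearMap.compr₂_apply, LinearMap.mul_apply', LinearMap.compl₂_apply,
      LinearMap.comp_apply]
    rw [hg₀b, hg₀b]
    by_cases h : x₁ = y₂
    · subst h
      rw [hb1 x₂ x₁ y₁ p₂ p₁, hg₀b, ← pathLift_comp hεidem hLl p₂ p₁]
    · rw [hb2 x₂ y₂ x₁ y₁ p₂ p₁ h, map_zero,
        pathLift_mul_ne hεidem hεorth hLl hLr h p₁ p₂]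
  -- the algebra lift
  refine ⟨AlgHom.ofLinearMap g₀ hg₀one hg₀mul, ?_⟩
  apply AlgHom.toLinearMap_injective
  refine b.ext fun s => ?_
  obtain ⟨x, y, p⟩ := s
  show π (g₀ (b ⟨x, y, p⟩)) = f (b ⟨x, y, p⟩)
  rw [hg₀b, hπP]
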